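/- arXiv:1606.00236 — 2 statements merged into one kernel-verified Lean document; each statement's English description precedes it below -/
import Mathlib

section
/- Let $(Z_n)_{n\ge 0}$ be a centered process with stationary increments, $Z_0=0$, and $(a_n)$ a regularly varying sequence of exponent $\gamma\in(0,1)$ such that $B:=\lim_n a_n^{-1}\mathbb{E}[\max_{1\le k\le n}Z_k]$ exists in $(0,\infty)$. If moreover the negative part $(Z_1)_- = \max(-Z_1,0)$ is bounded, and $\max_{0\le k\le n}Z_k$ has moments controlled so that $\|\max_{0\le k\le n}Z_k\|_p = O(a_n)$ for some $p>1$, then there exists $c>0$ such that for all $n\ge 1$, $\mathbb{P}(\max_{1\le\ell\le n} Z_\ell < 0) \ge c\, a_n/n$. -/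
open MeasureTheory Filter Finset

noncomputable section

def HasStationaryIncrements {Ω : Type*} [MeasurableSpace Ω] (μ : Measure Ω)
    (Z : ℕ → Ω → ℝ) : Prop :=
  ∀ k : ℕ, Measure.map (fun ω => fun n => Z (n + k) ω - Z k ω) μ
    = Measure.map (fun ω => fun n => Z n ω) μ

def RegularlyVarying (a : ℕ → ℝ) (γ : ℝ) : Prop :=
  ∀ lam : ℝ, 0 < lam →
    Filter.Tendsto (fun n : ℕ => a ⌊lam * n⌋₊ / a n) Filter.atTop (nhds (lam ^ γ))

namespace Stmt8Aux

lemma iSup_subtype_eq_sup' {ι : Type*} {s : Finset ι} (hs : s.Nonempty) (f : ι → ℝ) :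
    (⨆ k : s, f k.1) = s.sup' hs f := by
  rw [Finset.sup'_eq_csSup_image, iSup]
  congr 1
  ext y
  simp only [Set.mem_range, Set.mem_image, Finset.mem_coe, Subtype.exists, exists_prop]

lemma integrable_sup'' {Ω : Type*} [MeasurableSpace Ω] {μ : Measure Ω} {ι : Type*}
    {s : Finset ι} (hs : s.Nonempty) (f : ι → Ω → ℝ) (hf : ∀ i, Integrable (f i) μ) :
    Integrable (fun ω => s.sup' hs fun i => f i ω) μ := by
  induction hs using Finset.Nonempty.cons_induction with
  | singleton a => simpa using hf a
  | cons a s ha hs ih =>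
      have : (fun ω => (Finset.cons a s ha).sup' (Finset.cons_nonempty ha) fun i => f i ω)
          = fun ω => f a ω ⊔ s.sup' hs fun i => f i ω := by
        funext ω; exact Finset.sup'_cons hs _
      rw [this]
      exact (hf a).sup ih

lemma max_zero_eq (x : ℝ) : max 0 x = x + max (-x) 0 := by
  rcases le_total x 0 with h | h
  · rw [max_eq_left h, max_eq_left (by linarith)]; ring
  · rw [max_eq_right h, max_eq_right (by linarith)]; ring

variable {Ω : Type*} [MeasurableSpace Ω] {μ : Measure Ω} {Z : ℕ → Ω → ℝ}

/-- running max over `1..n` -/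
def Nn (Z : ℕ → Ω → ℝ) (n : ℕ) (ω : Ω) : ℝ := ⨆ k : Finset.Icc 1 n, Z k.1 ω

lemma Icc_ne (n : ℕ) (hn : 1 ≤ n) : (Finset.Icc 1 n).Nonempty :=
  ⟨1, Finset.mem_Icc.2 ⟨le_rfl, hn⟩⟩

lemma Nn_eq {n : ℕ} (hn : 1 ≤ n) (ω : Ω) :
    Nn Z n ω = (Finset.Icc 1 n).sup' (Icc_ne n hn) (fun k => Z k ω) := by
  show (⨆ k : (Finset.Icc 1 n : Finset ℕ), Z k.1 ω) = _
  exact iSup_subtype_eq_sup' (Icc_ne n hn) (fun k => Z k ω)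

lemma Nn_zero (ω : Ω) : Nn Z 0 ω = 0 := by
  have : IsEmpty ((Finset.Icc 1 0 : Finset ℕ) : Type) := by
    refine ⟨fun k => ?_⟩
    have := Finset.mem_Icc.1 k.2
    omega
  exact Real.iSup_of_isEmpty _

lemma integrable_Nn (hint : ∀ n, Integrable (Z n) μ) (n : ℕ) : Integrable (Nn Z n) μ := by
  rcases Nat.eq_zero_or_pos n with rfl | hn
  · have : Nn Z 0 = fun (_ : Ω) => (0:ℝ) := funext fun ω => Nn_zero ω
    rw [this]; exact integrable_zero _ _ _
  · have : Nn Z n = fun ω => (Finset.Icc 1 n).sup' (Icc_ne n hn) (fun k => Z k ω) :=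
      funext fun ω => Nn_eq hn ω
    rw [this]; exact integrable_sup'' _ _ hint

/-- expectation of running max -/
def LL (Z : ℕ → Ω → ℝ) (μ : Measure Ω) (n : ℕ) : ℝ := ∫ ω, Nn Z n ω ∂μ

/-- expectation of running max including time 0 -/
def ee (Z : ℕ → Ω → ℝ) (μ : Measure Ω) (n : ℕ) : ℝ := ∫ ω, max 0 (Nn Z n ω) ∂μ

/-- expectation of negative part of running max -/
def vneg (Z : ℕ → Ω → ℝ) (μ : Measure Ω) (n : ℕ) : ℝ := ∫ ω, max (-(Nn Z n ω)) 0 ∂μ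

lemma ee_eq (hint : ∀ n, Integrable (Z n) μ) (n : ℕ) :
    ee Z μ n = LL Z μ n + vneg Z μ n := by
  have h1 : Integrable (Nn Z n) μ := integrable_Nn hint n
  have h2 : Integrable (fun ω => max (-(Nn Z n ω)) 0) μ := h1.neg.pos_part
  rw [ee, LL, vneg, ← integral_add h1 h2]
  congr 1
  funext ω
  exact max_zero_eq _

lemma vneg_nonneg (n : ℕ) : 0 ≤ vneg Z μ n :=
  integral_nonneg fun ω => le_max_right _ _

/-- Key stationarity identity. -/
lemma key (hmeas : ∀ n, Measurable (Z n)) (hZ0 : ∀ ω, Z 0 ω = 0)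
    (hstat : HasStationaryIncrements μ Z) (hint : ∀ n, Integrable (Z n) μ)
    (hcent : ∀ n, ∫ ω, Z n ω ∂μ = 0) (m : ℕ) :
    LL Z μ (m + 1) = ee Z μ m := by
  have h₀ : (Finset.Icc 0 m).Nonempty := ⟨0, by simp⟩
  set F : (ℕ → ℝ) → ℝ := fun f => (Finset.Icc 0 m).sup' h₀ (fun k => f k) with hF
  have hFmeas : Measurable F := by
    have : Measurable ((Finset.Icc 0 m).sup' h₀ (fun k (f : ℕ → ℝ) => f k)) :=
      Finset.measurable_sup' h₀ (fun k _ => measurable_pi_apply k)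
    have heq : F = (Finset.Icc 0 m).sup' h₀ (fun k (f : ℕ → ℝ) => f k) := by
      funext f; exact (Finset.sup'_apply h₀ (fun k (f : ℕ → ℝ) => f k) f).symm
    rw [heq]; exact this
  have hφ1 : Measurable (fun ω => fun n => Z (n + 1) ω - Z 1 ω) :=
    measurable_pi_lambda _ (fun n => (hmeas (n + 1)).sub (hmeas 1))
  have hφ0 : Measurable (fun ω => fun n => Z n ω) :=
    measurable_pi_lambda _ (fun n => hmeas n)
  have hmapeq : ∫ ω, F (fun n => Z (n + 1) ω - Z 1 ω) ∂μ = ∫ ω, F (fun n => Z n ω) ∂μ := by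
    rw [← integral_map hφ1.aemeasurable hFmeas.aestronglyMeasurable, hstat 1,
      integral_map hφ0.aemeasurable hFmeas.aestronglyMeasurable]
  -- pointwise identification of the left side
  have hshift : ∀ ω, F (fun n => Z (n + 1) ω - Z 1 ω) = Nn Z (m + 1) ω - Z 1 ω := by
    intro ω
    rw [Nn_eq (Nat.le_add_left 1 m)]
    have himg : (Finset.Icc 1 (m + 1) : Finset ℕ) = (Finset.Icc 0 m).image (1 + ·) := by
      rw [Finset.image_add_left_Icc, Nat.add_comm 1 m]
    have h1 : (Finset.Icc 1 (m + 1)).sup' (Icc_ne _ (Nat.le_add_left 1 m)) (fun k => Z k ω)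
        = (Finset.Icc 0 m).sup' h₀ (fun k => Z (k + 1) ω) := by
      rw [Finset.sup'_congr (Icc_ne _ (Nat.le_add_left 1 m)) himg (fun x _ => rfl)]
      rw [Finset.sup'_image]
      exact Finset.sup'_congr _ rfl (fun x _ => by simp [Nat.add_comm])
    have h2 : F (fun n => Z (n + 1) ω - Z 1 ω)
        = ((Finset.Icc 0 m).sup' h₀ (fun k => Z (k + 1) ω)) - Z 1 ω := by
      have := comp_sup'_eq_sup'_comp (α := ℝ) h₀ (f := fun k => Z (k + 1) ω)
        (fun x => x - Z 1 ω) (fun x y => by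
          exact (max_sub_sub_right x y (Z 1 ω)).symm)
      exact this.symm
    rw [h2, h1]
  -- pointwise identification of the right side
  have hright : ∀ ω, F (fun n => Z n ω) = max 0 (Nn Z m ω) := by
    intro ω
    rcases Nat.eq_zero_or_pos m with rfl | hm
    · have hn0 : Nn Z 0 ω = 0 := Nn_zero ω
      simp only [hF, Finset.Icc_self, Finset.sup'_singleton, hZ0 ω, hn0]
      simp
    · simp only [hF]
      rw [Nn_eq hm]
      have hins : (Finset.Icc 0 m : Finset ℕ) = insert 0 (Finset.Icc 1 m) := by
        ext k; simp only [Finset.mem_Icc, Finset.mem_insert]; omega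
      rw [Finset.sup'_congr h₀ hins (fun x _ => rfl)]
      rw [Finset.sup'_insert (H := Icc_ne m hm)]
      rw [hZ0 ω]
  have hint1 : Integrable (Nn Z (m + 1)) μ := integrable_Nn hint (m + 1)
  have h3 : ∫ ω, (Nn Z (m + 1) ω - Z 1 ω) ∂μ = LL Z μ (m + 1) := by
    rw [integral_sub hint1 (hint 1), hcent 1, LL]; ring
  calc LL Z μ (m + 1) = ∫ ω, (Nn Z (m + 1) ω - Z 1 ω) ∂μ := h3.symm
    _ = ∫ ω, F (fun n => Z (n + 1) ω - Z 1 ω) ∂μ := by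
        congr 1; funext ω; exact (hshift ω).symm
    _ = ∫ ω, F (fun n => Z n ω) ∂μ := hmapeq
    _ = ∫ ω, max 0 (Nn Z m ω) ∂μ := by congr 1; funext ω; exact hright ω
    _ = ee Z μ m := rfl

end Stmt8Aux

open Stmt8Aux

/-- If `(Z_1)_-` is bounded and the running maximum is `L^p`-controlled by `a_n`,
then the persistence probability is bounded below by `c a_n / n`. -/
theorem stmt8 {Ω : Type*} [MeasurableSpace Ω] (μ : Measure Ω) [IsProbabilityMeasure μ]
    (Z : ℕ → Ω → ℝ) (hmeas : ∀ n, Measurable (Z n)) (hZ0 : ∀ ω, Z 0 ω = 0)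
    (hstat : HasStationaryIncrements μ Z)
    (hint : ∀ n, Integrable (Z n) μ) (hcent : ∀ n, ∫ ω, Z n ω ∂μ = 0)
    (a : ℕ → ℝ) (hapos : ∀ n, 0 < a n)
    (γ : ℝ) (hγ : γ ∈ Set.Ioo (0:ℝ) 1) (hreg : RegularlyVarying a γ)
    (B : ℝ) (hB : 0 < B)
    (hlim : Filter.Tendsto (fun n : ℕ =>
        (∫ ω, ⨆ k : Finset.Icc 1 n, Z k.1 ω ∂μ) / a n) Filter.atTop (nhds B))
    (K : ℝ) (hbdd : ∀ ω, max (-Z 1 ω) 0 ≤ K)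
    (p : ℝ) (hp : 1 < p)
    (hLp : ∃ C > 0, ∀ n : ℕ,
        (∫ ω, |⨆ k : Finset.Icc 0 n, Z k.1 ω| ^ p ∂μ) ^ (1 / p) ≤ C * a n) :
    ∃ c > 0, ∀ n : ℕ, 1 ≤ n →
      c * a n / n ≤ (μ {ω | ∀ ℓ ∈ Finset.Icc 1 n, Z ℓ ω < 0}).toReal := by
  classical
  set Ev : ℕ → Set Ω := fun n => {ω | ∀ ℓ ∈ Finset.Icc 1 n, Z ℓ ω < 0} with hEvdef
  set P : ℕ → ℝ := fun n => (μ (Ev n)).toReal with hPdef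
  have hEvmeas : ∀ n, MeasurableSet (Ev n) := by
    intro n
    have : Ev n = ⋂ ℓ ∈ Finset.Icc 1 n, {ω | Z ℓ ω < 0} := by
      ext ω; simp [hEvdef]
    rw [this]
    exact MeasurableSet.biInter (Finset.Icc 1 n).countable_toSet
      (fun ℓ _ => measurableSet_lt (hmeas ℓ) measurable_const)
  have hPnonneg : ∀ n, 0 ≤ P n := fun n => ENNReal.toReal_nonneg
  have hPle1 : ∀ n, P n ≤ 1 := fun n => by
    simpa using ENNReal.toReal_mono ENNReal.one_ne_top prob_le_one
  have hPmono : ∀ m n, m ≤ n → P n ≤ P m := by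
    intro m n hmn
    refine ENNReal.toReal_mono (measure_ne_top μ _) (measure_mono ?_)
    intro ω hω ℓ hℓ
    exact hω ℓ (Finset.mem_Icc.2 ⟨(Finset.mem_Icc.1 hℓ).1,
      le_trans (Finset.mem_Icc.1 hℓ).2 hmn⟩)
  set K' : ℝ := max K 1 with hK'def
  have hK'pos : (0:ℝ) < K' := lt_of_lt_of_le one_pos (le_max_right _ _)
  have hvle : ∀ n, 1 ≤ n → vneg Z μ n ≤ K' * P n := by
    intro n hn
    have hptwise : ∀ ω, max (-(Nn Z n ω)) 0 ≤ (Ev n).indicator (fun _ => K') ω := by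
      intro ω
      by_cases hω : ω ∈ Ev n
      · rw [Set.indicator_of_mem hω]
        have h1 : Z 1 ω ≤ Nn Z n ω := by
          rw [Nn_eq hn]
          exact Finset.le_sup' (f := fun k => Z k ω) (Finset.mem_Icc.2 ⟨le_rfl, hn⟩)
        calc max (-(Nn Z n ω)) 0 ≤ max (-Z 1 ω) 0 :=
              max_le_max (neg_le_neg h1) le_rfl
          _ ≤ K := hbdd ω
          _ ≤ K' := le_max_left _ _
      · rw [Set.indicator_of_notMem hω]
        have hexists : ∃ ℓ ∈ Finset.Icc 1 n, 0 ≤ Z ℓ ω := by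
          by_contra hcon
          push_neg at hcon
          exact hω (fun ℓ hℓ => hcon ℓ hℓ)
        obtain ⟨ℓ, hℓ, hZℓ⟩ := hexists
        have hnn : 0 ≤ Nn Z n ω := by
          rw [Nn_eq hn]
          exact le_trans hZℓ (Finset.le_sup' (f := fun k => Z k ω) hℓ)
        rw [max_eq_right (neg_nonpos.2 hnn)]
    have hind : ∫ ω, (Ev n).indicator (fun _ => K') ω ∂μ = (μ (Ev n)).toReal * K' := by
      rw [integral_indicator_const K' (hEvmeas n)]; simp [smul_eq_mul, measureReal_def]
    calc vneg Z μ n ≤ ∫ ω, (Ev n).indicator (fun _ => K') ω ∂μ :=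
          integral_mono ((integrable_Nn hint n).neg.pos_part)
            ((integrable_const K').indicator (hEvmeas n)) hptwise
      _ = K' * P n := by rw [hind, hPdef]; ring
  have hlim' : Tendsto (fun n : ℕ => LL Z μ n / a n) atTop (nhds B) := hlim
  have hkey : ∀ m, LL Z μ (m+1) = ee Z μ m := key hmeas hZ0 hstat hint hcent
  have heeq : ∀ n, ee Z μ n = LL Z μ n + vneg Z μ n := ee_eq hint
  have hemono : Monotone (ee Z μ) := monotone_nat_of_le_succ (fun m => by
    have h1 := heeq (m+1)
    have h2 := hkey m
    have h3 := vneg_nonneg (Z := Z) (μ := μ) (m+1)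
    linarith)
  have hLmono : ∀ m n, 1 ≤ m → m ≤ n → LL Z μ m ≤ LL Z μ n := by
    intro m n hm hmn
    obtain ⟨m', rfl⟩ : ∃ m', m = m' + 1 := ⟨m - 1, by omega⟩
    obtain ⟨n', rfl⟩ : ∃ n', n = n' + 1 := ⟨n - 1, by omega⟩
    rw [hkey, hkey]
    exact hemono (by omega)
  have h2γ : (1:ℝ) < (2:ℝ) ^ γ := by
    rw [Real.one_lt_rpow_iff_of_pos (by norm_num)]
    exact Or.inl ⟨one_lt_two, hγ.1⟩
  have hfloor : ∀ n : ℕ, ⌊(2:ℝ) * (n:ℝ)⌋₊ = 2 * n := by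
    intro n
    rw [show ((2:ℝ) * (n:ℝ)) = ((2 * n : ℕ) : ℝ) by push_cast; ring, Nat.floor_natCast]
  have hreg2 : Tendsto (fun n : ℕ => a (2 * n) / a n) atTop (nhds ((2:ℝ) ^ γ)) := by
    have h := hreg 2 (by norm_num)
    simpa only [hfloor] using h
  have htwo : Tendsto (fun n : ℕ => 2 * n) atTop atTop :=
    tendsto_atTop_mono (fun n => Nat.le_mul_of_pos_left n (by norm_num)) tendsto_id
  have hL2 : Tendsto (fun n : ℕ => LL Z μ (2*n) / a n) atTop (nhds (B * 2 ^ γ)) := by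
    have h := (hlim'.comp htwo).mul hreg2
    have heq : (fun n : ℕ => (LL Z μ (2*n) / a (2*n)) * (a (2*n) / a n))
        = fun n : ℕ => LL Z μ (2*n) / a n := by
      funext n
      have h1 := (hapos (2*n)).ne'
      have h2 := (hapos n).ne'
      field_simp
    rw [← heq]
    exact h
  have hdiff : Tendsto (fun n : ℕ => (LL Z μ (2*n) - LL Z μ n) / a n) atTop
      (nhds (B * 2 ^ γ - B)) := by
    simpa only [sub_div] using hL2.sub hlim'
  set δ : ℝ := (B * 2 ^ γ - B) / 2 with hδdef
  have hδ : 0 < δ := by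
    have : 0 < B * 2 ^ γ - B := by nlinarith
    linarith
  have hev := hdiff.eventually (eventually_ge_nhds (show δ < B * 2 ^ γ - B by linarith))
  have hev2 := hlim'.eventually (eventually_ge_nhds (show B/2 < B by linarith))
  have hev3 := hlim'.eventually (eventually_le_nhds (show B < 2*B by linarith))
  obtain ⟨n₀', hn₀'⟩ := eventually_atTop.1 ((hev.and hev2).and hev3)
  set n₀ := max n₀' 1 with hn₀def
  have hn₀1 : 1 ≤ n₀ := le_max_right _ _
  have hg1 : ∀ n, n₀ ≤ n → δ * a n ≤ LL Z μ (2*n) - LL Z μ n := by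
    intro n hn
    have h := (hn₀' n (le_trans (le_max_left _ _) hn)).1.1
    exact (le_div_iff₀ (hapos n)).1 h
  have hg2 : ∀ n, n₀ ≤ n → (B/2) * a n ≤ LL Z μ n := by
    intro n hn
    have h := (hn₀' n (le_trans (le_max_left _ _) hn)).1.2
    exact (le_div_iff₀ (hapos n)).1 h
  have hg3 : ∀ n, n₀ ≤ n → LL Z μ n ≤ 2*B*a n := by
    intro n hn
    have h := (hn₀' n (le_trans (le_max_left _ _) hn)).2
    exact (div_le_iff₀ (hapos n)).1 h
  have hLpos : 0 < LL Z μ n₀ := by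
    refine lt_of_lt_of_le ?_ (hg2 n₀ le_rfl)
    have := hapos n₀
    positivity
  set ρ : ℝ := δ / (2*B) with hρdef
  have hρ : 0 < ρ := by positivity
  have hstep : ∀ m, n₀ ≤ m → (1+ρ) * LL Z μ m ≤ LL Z μ (2*m) := by
    intro m hm
    have h1 := hg1 m hm
    have h3 := hg3 m hm
    have h4 : ρ * LL Z μ m ≤ δ * a m := by
      have h5 := mul_le_mul_of_nonneg_left h3 hρ.le
      calc ρ * LL Z μ m ≤ ρ * (2*B*a m) := h5
        _ = δ * a m := by rw [hρdef]; field_simp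
    nlinarith
  have hgrow : ∀ k : ℕ, (1+ρ)^k * LL Z μ n₀ ≤ LL Z μ (2^k * n₀) := by
    intro k
    induction k with
    | zero => simp
    | succ k ih =>
        have hle : n₀ ≤ 2^k * n₀ := Nat.le_mul_of_pos_left _ (by positivity)
        have heq : (2:ℕ)^(k+1) * n₀ = 2*(2^k * n₀) := by ring
        rw [heq]
        calc (1+ρ)^(k+1) * LL Z μ n₀ = (1+ρ) * ((1+ρ)^k * LL Z μ n₀) := by ring
          _ ≤ (1+ρ) * LL Z μ (2^k * n₀) := by nlinarith
          _ ≤ LL Z μ (2*(2^k * n₀)) := hstep _ hle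
  have hLtop : Tendsto (LL Z μ) atTop atTop := by
    rw [tendsto_atTop]
    intro C
    have hpow : Tendsto (fun k : ℕ => (1+ρ)^k * LL Z μ n₀) atTop atTop :=
      (tendsto_pow_atTop_atTop_of_one_lt (by linarith)).atTop_mul_const hLpos
    obtain ⟨k, hk⟩ := (hpow.eventually_ge_atTop C).exists
    refine eventually_atTop.2 ⟨2^k * n₀, fun n hn => ?_⟩
    have hle : 1 ≤ 2^k * n₀ := le_trans hn₀1 (Nat.le_mul_of_pos_left _ (by positivity))
    exact le_trans hk (le_trans (hgrow k) (hLmono _ _ hle hn))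
  obtain ⟨n₁', hn₁'⟩ := eventually_atTop.1 (hLtop.eventually_ge_atTop (4*B*K'/δ))
  set n₁ := max n₁' n₀ with hn₁def
  have hn₁0 : n₀ ≤ n₁ := le_max_right _ _
  have hn₁1 : 1 ≤ n₁ := le_trans hn₀1 hn₁0
  have haK : ∀ n, n₁ ≤ n → K' ≤ (δ/2) * a n := by
    intro n hn
    have hL := hn₁' n (le_trans (le_max_left _ _) hn)
    have h3 := hg3 n (le_trans hn₁0 hn)
    rw [div_le_iff₀ hδ] at hL
    nlinarith [hapos n]
  have hmain : ∀ n, n₁ ≤ n → (δ/2) * a n ≤ (n:ℝ) * (K' * P n) := by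
    intro n hn
    have hn0 : n₀ ≤ n := le_trans hn₁0 hn
    have hn1 : 1 ≤ n := le_trans hn₁1 hn
    have hlow : (δ/2) * a n ≤ ee Z μ (2*n) - ee Z μ n := by
      have e2 : LL Z μ (2*n) ≤ ee Z μ (2*n) := by
        have := vneg_nonneg (Z := Z) (μ := μ) (2*n)
        rw [heeq (2*n)]; linarith
      have e1 : ee Z μ n ≤ LL Z μ n + K' := by
        have hv := hvle n hn1
        have hp1 := hPle1 n
        have hpn := hPnonneg n
        rw [heeq n]
        nlinarith
      have hd := hg1 n hn0
      have hk := haK n hn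
      linarith
    have hup : ∀ j : ℕ, ee Z μ (n + j) - ee Z μ n ≤ (j:ℝ) * (K' * P n) := by
      intro j
      induction j with
      | zero => simp
      | succ j ih =>
          have hv : vneg Z μ (n+j+1) ≤ K' * P n := by
            calc vneg Z μ (n+j+1) ≤ K' * P (n+j+1) := hvle _ (by omega)
              _ ≤ K' * P n := mul_le_mul_of_nonneg_left (hPmono n (n+j+1) (by omega)) hK'pos.le
          have he : ee Z μ (n+j+1) = ee Z μ (n+j) + vneg Z μ (n+j+1) := by
            rw [heeq (n+j+1), hkey (n+j)]
          have hix : n + (j+1) = n + j + 1 := by omega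
          rw [hix, he]
          push_cast
          have hKP : 0 ≤ K' * P n := mul_nonneg hK'pos.le (hPnonneg n)
          linarith
    have h2n := hup n
    have hnn : n + n = 2*n := by omega
    rw [hnn] at h2n
    linarith
  set c₁ : ℝ := δ / (2 * K') with hc₁def
  have hc₁ : 0 < c₁ := by positivity
  have hboundlarge : ∀ n, n₁ ≤ n → c₁ * a n / n ≤ P n := by
    intro n hn
    have hn1 : 1 ≤ n := le_trans hn₁1 hn
    have hnpos : (0:ℝ) < n := by exact_mod_cast Nat.lt_of_lt_of_le Nat.zero_lt_one hn1
    rw [div_le_iff₀ hnpos]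
    have h5 : K' * (c₁ * a n) ≤ K' * (P n * n) := by
      have h6 : K' * (c₁ * a n) = (δ/2) * a n := by
        rw [hc₁def]; field_simp
      rw [h6]
      have := hmain n hn
      linarith [hmain n hn]
    exact le_of_mul_le_mul_left h5 hK'pos
  have hn₁pos : (0:ℝ) < (n₁:ℝ) := by exact_mod_cast Nat.lt_of_lt_of_le Nat.zero_lt_one hn₁1
  have hq : 0 < P n₁ := by
    refine lt_of_lt_of_le ?_ (hboundlarge n₁ le_rfl)
    have := hapos n₁
    positivity
  set A : ℝ := (Finset.Icc 1 n₁).sup' (Icc_ne n₁ hn₁1) (fun n => a n / n) with hAdef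
  have hApos : 0 < A := by
    refine lt_of_lt_of_le ?_ (Finset.le_sup' (f := fun n => a n / (n:ℝ))
      (Finset.mem_Icc.2 ⟨hn₁1, le_rfl⟩))
    have := hapos n₁
    positivity
  refine ⟨min c₁ (P n₁ / A), lt_min hc₁ (div_pos hq hApos), ?_⟩
  intro n hn
  have hgoal : min c₁ (P n₁ / A) * a n / n ≤ P n := by
    have hnpos : (0:ℝ) < n := by exact_mod_cast Nat.lt_of_lt_of_le Nat.zero_lt_one hn
    rcases le_or_gt n₁ n with h | h
    · calc min c₁ (P n₁/A) * a n / n ≤ c₁ * a n / n := by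
            gcongr
            · exact (hapos n).le
            · exact min_le_left _ _
        _ ≤ P n := hboundlarge n h
    · have hPn : P n₁ ≤ P n := hPmono n n₁ h.le
      have hle : a n / n ≤ A := Finset.le_sup' (f := fun m => a m / (m:ℝ))
        (Finset.mem_Icc.2 ⟨hn, h.le⟩)
      have hmin2 : min c₁ (P n₁/A) ≤ P n₁/A := min_le_right _ _
      have hfrac : 0 ≤ a n / n := div_nonneg (hapos n).le (Nat.cast_nonneg n)
      calc min c₁ (P n₁/A) * a n / n = min c₁ (P n₁/A) * (a n / n) := by ring
        _ ≤ (P n₁/A) * (a n / n) := mul_le_mul_of_nonneg_right hmin2 hfrac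
        _ ≤ (P n₁/A) * A := by
            exact mul_le_mul_of_nonneg_left hle (div_nonneg hq.le hApos.le)
        _ = P n₁ := div_mul_cancel₀ _ (ne_of_gt hApos)
        _ ≤ P n := hPn
  exact hgoal

end
end

section
/- Let $(Z_n)_{n\ge 0}$ be a centered process with stationary increments, $Z_0=0$, and $(a_n)$ regularly varying with exponent $\gamma\in(0,1)$ such that $B:=\lim_n a_n^{-1}\mathbb{E}[\max_{1\le k\le n}Z_k]\in(0,\infty)$. Then $\limsup_{n\to\infty} \frac{n}{a_n}\mathbb{P}(\max_{1\le\ell\le n} Z_\ell \le -1) \le B$. -/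
open MeasureTheory Filter Finset

noncomputable section

lemma myIntegrableSup' {Ω : Type*} [MeasurableSpace Ω] (μ : Measure Ω)
    (Z : ℕ → Ω → ℝ) (hint : ∀ n, Integrable (Z n) μ)
    (s : Finset ℕ) (hs : s.Nonempty) :
      Integrable (fun ω => s.sup' hs (fun k => Z k ω)) μ := by
  induction hs using Finset.Nonempty.cons_induction with
  | singleton a => simpa using hint a
  | cons a s h hs ih =>
      have : (fun ω => (Finset.cons a s h).sup' (Finset.cons_nonempty h) (fun k => Z k ω))
          = fun ω => Z a ω ⊔ s.sup' hs (fun k => Z k ω) := by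
        funext ω; exact Finset.sup'_cons hs (fun k => Z k ω)
      rw [this]
      exact (hint a).sup ih

lemma mySup'Eq {Ω : Type*} (Z : ℕ → Ω → ℝ) (s : Finset ℕ) (hs : s.Nonempty) (ω : Ω) :
    (⨆ k : s, Z k.1 ω) = s.sup' hs (fun k => Z k ω) := by
  rw [Finset.sup'_eq_csSup_image, iSup]
  congr 1
  ext x
  constructor
  · rintro ⟨⟨k, hk⟩, rfl⟩; exact ⟨k, hk, rfl⟩
  · rintro ⟨k, hk, rfl⟩; exact ⟨⟨k, hk⟩, rfl⟩

lemma myMeasSet {Ω : Type*} [MeasurableSpace Ω] (g : ℕ → Ω → ℝ)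
    (hg : ∀ i, Measurable (g i)) (s : Finset ℕ) :
    MeasurableSet {ω | ∀ ℓ ∈ s, g ℓ ω ≤ -1} := by
  have : {ω | ∀ ℓ ∈ s, g ℓ ω ≤ -1} = ⋂ ℓ ∈ (s : Set ℕ), {ω | g ℓ ω ≤ -1} := by
    ext ω; simp
  rw [this]
  exact MeasurableSet.biInter (s : Set ℕ).to_countable
    (fun ℓ _ => measurableSet_le (hg ℓ) measurable_const)

lemma myKey {Ω : Type*} [MeasurableSpace Ω] (μ : Measure Ω) [IsProbabilityMeasure μ]
    (Z : ℕ → Ω → ℝ) (hmeas : ∀ n, Measurable (Z n)) (hZ0 : ∀ ω, Z 0 ω = 0)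
    (hstat : HasStationaryIncrements μ Z)
    (hint : ∀ n, Integrable (Z n) μ) (hcent : ∀ n, ∫ ω, Z n ω ∂μ = 0)
    (n : ℕ) (hn : 1 ≤ n) :
    (n : ℝ) * (μ {ω | ∀ ℓ ∈ Finset.Icc 1 n, Z ℓ ω ≤ -1}).toReal
      ≤ (∫ ω, ⨆ k : Finset.Icc 1 n, Z k.1 ω ∂μ) + ∫ ω, |Z 1 ω| ∂μ := by
  set A : Set Ω := {ω | ∀ ℓ ∈ Finset.Icc 1 n, Z ℓ ω ≤ -1} with hA
  set E : ℕ → Set Ω := fun k => {ω | ∀ ℓ ∈ Finset.Icc (k+1) n, Z ℓ ω - Z k ω ≤ -1} with hE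
  have hEmeas : ∀ k, MeasurableSet (E k) := fun k =>
    myMeasSet (fun ℓ ω => Z ℓ ω - Z k ω) (fun ℓ => (hmeas ℓ).sub (hmeas k)) _
  -- the running maxima
  have hne : ∀ k : ℕ, (insert n (Finset.Icc k n)).Nonempty := fun k => insert_nonempty _ _
  set m : ℕ → Ω → ℝ := fun k ω => (insert n (Finset.Icc k n)).sup' (hne k) (fun ℓ => Z ℓ ω)
    with hm
  have hm_int : ∀ k, Integrable (m k) μ := fun k => myIntegrableSup' μ Z hint _ _
  -- measure comparison : μ A ≤ μ (E k) for k < n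
  have hmc : ∀ k, k < n → μ A ≤ μ (E k) := by
    intro k hk
    set S : Set (ℕ → ℝ) := {f | ∀ mm ∈ Finset.Icc 1 (n-k), f mm ≤ -1} with hS
    have hSmeas : MeasurableSet S := myMeasSet (fun i (f : ℕ → ℝ) => f i) (fun i => measurable_pi_apply i) _
    have hTmeas : Measurable (fun ω => fun j => Z (j + k) ω - Z k ω) :=
      measurable_pi_lambda _ (fun j => (hmeas (j+k)).sub (hmeas k))
    have hZmeas : Measurable (fun ω => fun j => Z j ω) :=
      measurable_pi_lambda _ (fun j => hmeas j)
    have hpre : E k = (fun ω => fun j => Z (j + k) ω - Z k ω) ⁻¹' S := by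
      ext ω
      simp only [hE, hS, Set.mem_setOf_eq, Set.mem_preimage, Finset.mem_Icc]
      constructor
      · intro h mm hmm
        have := h (mm + k) ⟨by omega, by omega⟩
        exact this
      · intro h ℓ hℓ
        have := h (ℓ - k) ⟨by omega, by omega⟩
        have heq : ℓ - k + k = ℓ := by omega
        rwa [heq] at this
    have h1 : μ (E k) = μ {ω | ∀ mm ∈ Finset.Icc 1 (n-k), Z mm ω ≤ -1} := by
      rw [hpre, ← Measure.map_apply hTmeas hSmeas, hstat k,
        Measure.map_apply hZmeas hSmeas]
      rfl
    rw [h1]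
    apply measure_mono
    intro ω hω mm hmm
    refine hω mm ?_
    simp only [Finset.mem_Icc] at hmm ⊢
    omega
  -- pointwise inequality
  have hpt : ∀ ω, (∑ k ∈ Finset.range n, (E k).indicator (fun _ => (1:ℝ)) ω)
      ≤ m 0 ω - Z n ω := by
    intro ω
    have tele : ∑ k ∈ Finset.range n, (m k ω - m (k+1) ω) = m 0 ω - m n ω :=
      Finset.sum_range_sub' (fun k => m k ω) n
    have hmn : m n ω = Z n ω := by
      simp only [hm, Finset.Icc_self, Finset.insert_eq_self.mpr (Finset.mem_singleton_self n),
        Finset.sup'_singleton]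
    have hterm : ∀ k ∈ Finset.range n,
        (E k).indicator (fun _ => (1:ℝ)) ω ≤ m k ω - m (k+1) ω := by
      intro k hk
      rw [Finset.mem_range] at hk
      have hsub : insert n (Finset.Icc (k+1) n) ⊆ insert n (Finset.Icc k n) :=
        Finset.insert_subset_insert _ (Finset.Icc_subset_Icc (by omega) le_rfl)
      by_cases hω : ω ∈ E k
      · rw [Set.indicator_of_mem hω]
        have h1 : Z k ω ≤ m k ω :=
          Finset.le_sup' (fun ℓ => Z ℓ ω)
            (Finset.mem_insert_of_mem (Finset.mem_Icc.mpr ⟨le_rfl, by omega⟩))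
        have h2 : m (k+1) ω ≤ Z k ω - 1 := by
          apply Finset.sup'_le
          intro ℓ hℓ
          have hℓ' : ℓ ∈ Finset.Icc (k+1) n := by
            rcases Finset.mem_insert.mp hℓ with h | h
            · exact h ▸ Finset.mem_Icc.mpr ⟨by omega, le_rfl⟩
            · exact h
          have := hω ℓ hℓ'
          linarith
        linarith
      · rw [Set.indicator_of_notMem hω]
        have : m (k+1) ω ≤ m k ω := Finset.sup'_mono _ hsub _
        linarith
    calc ∑ k ∈ Finset.range n, (E k).indicator (fun _ => (1:ℝ)) ω
        ≤ ∑ k ∈ Finset.range n, (m k ω - m (k+1) ω) := Finset.sum_le_sum hterm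
      _ = m 0 ω - m n ω := tele
      _ = m 0 ω - Z n ω := by rw [hmn]
  -- integrate
  have hind_int : ∀ k, Integrable ((E k).indicator (fun _ => (1:ℝ))) μ :=
    fun k => (integrable_const (1:ℝ)).indicator (hEmeas k)
  have hsum_int : Integrable (fun ω => ∑ k ∈ Finset.range n,
      (E k).indicator (fun _ => (1:ℝ)) ω) μ :=
    integrable_finset_sum _ (fun k _ => hind_int k)
  have hint1 : (∑ k ∈ Finset.range n, (μ (E k)).toReal) ≤ ∫ ω, m 0 ω ∂μ := by
    calc ∑ k ∈ Finset.range n, (μ (E k)).toReal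
        = ∑ k ∈ Finset.range n, ∫ ω, (E k).indicator (fun _ => (1:ℝ)) ω ∂μ :=
          Finset.sum_congr rfl (fun k _ => by
            rw [integral_indicator_const (1:ℝ) (hEmeas k), smul_eq_mul, mul_one]; rfl)
      _ = ∫ ω, ∑ k ∈ Finset.range n, (E k).indicator (fun _ => (1:ℝ)) ω ∂μ :=
          (integral_finset_sum _ (fun k _ => hind_int k)).symm
      _ ≤ ∫ ω, (m 0 ω - Z n ω) ∂μ :=
          integral_mono hsum_int ((hm_int 0).sub (hint n)) hpt
      _ = (∫ ω, m 0 ω ∂μ) - ∫ ω, Z n ω ∂μ := integral_sub (hm_int 0) (hint n)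
      _ = ∫ ω, m 0 ω ∂μ := by rw [hcent n, sub_zero]
  have hne1 : (Finset.Icc 1 n).Nonempty := ⟨1, Finset.mem_Icc.mpr ⟨le_rfl, hn⟩⟩
  have hcount : (n : ℝ) * (μ A).toReal ≤ ∫ ω, m 0 ω ∂μ := by
    have h0 : (n : ℝ) * (μ A).toReal = ∑ _k ∈ Finset.range n, (μ A).toReal := by
      rw [Finset.sum_const, Finset.card_range, nsmul_eq_mul]
    rw [h0]
    refine le_trans (Finset.sum_le_sum fun k hk => ?_) hint1
    exact ENNReal.toReal_mono (measure_ne_top μ _) (hmc k (Finset.mem_range.mp hk))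
  -- compare ∫ m 0 with the integral of the sup over Icc 1 n
  have hsup_int : Integrable (fun ω => (Finset.Icc 1 n).sup' hne1 (fun k => Z k ω)) μ :=
    myIntegrableSup' μ Z hint _ _
  have hpt2 : ∀ ω, m 0 ω ≤ (Finset.Icc 1 n).sup' hne1 (fun k => Z k ω) + |Z 1 ω| := by
    intro ω
    have hZ1 : Z 1 ω ≤ (Finset.Icc 1 n).sup' hne1 (fun k => Z k ω) :=
      Finset.le_sup' (fun k => Z k ω) (Finset.mem_Icc.mpr ⟨le_rfl, hn⟩)
    have habs : -|Z 1 ω| ≤ Z 1 ω := neg_abs_le _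
    apply Finset.sup'_le
    intro ℓ hℓ
    by_cases hℓ0 : ℓ = 0
    · rw [hℓ0, hZ0 ω]; linarith
    · have hℓ' : ℓ ∈ Finset.Icc 1 n := by
        rcases Finset.mem_insert.mp hℓ with h | h
        · subst h; exact Finset.mem_Icc.mpr ⟨hn, le_rfl⟩
        · rw [Finset.mem_Icc] at h ⊢; omega
      have := Finset.le_sup' (fun k => Z k ω) hℓ'
      have h2 := abs_nonneg (Z 1 ω)
      linarith
  have hfin : (∫ ω, m 0 ω ∂μ) ≤ (∫ ω, ⨆ k : Finset.Icc 1 n, Z k.1 ω ∂μ) + ∫ ω, |Z 1 ω| ∂μ := by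
    have heq : (fun ω => ⨆ k : Finset.Icc 1 n, Z k.1 ω)
        = fun ω => (Finset.Icc 1 n).sup' hne1 (fun k => Z k ω) :=
      funext fun ω => mySup'Eq Z _ hne1 ω
    rw [heq, ← integral_add hsup_int (hint 1).abs]
    exact integral_mono (hm_int 0) (hsup_int.add (hint 1).abs) hpt2
  exact le_trans hcount hfin

theorem stmt9 {Ω : Type*} [MeasurableSpace Ω] (μ : Measure Ω) [IsProbabilityMeasure μ]
    (Z : ℕ → Ω → ℝ) (hmeas : ∀ n, Measurable (Z n)) (hZ0 : ∀ ω, Z 0 ω = 0)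
    (hstat : HasStationaryIncrements μ Z)
    (hint : ∀ n, Integrable (Z n) μ) (hcent : ∀ n, ∫ ω, Z n ω ∂μ = 0)
    (a : ℕ → ℝ) (hapos : ∀ n, 0 < a n)
    (γ : ℝ) (hγ : γ ∈ Set.Ioo (0:ℝ) 1) (hreg : RegularlyVarying a γ)
    (B : ℝ) (hB : 0 < B)
    (hlim : Filter.Tendsto (fun n : ℕ =>
        (∫ ω, ⨆ k : Finset.Icc 1 n, Z k.1 ω ∂μ) / a n) Filter.atTop (nhds B)) :
    atTop.limsup (fun n : ℕ =>
        (n : ℝ) / a n * (μ {ω | ∀ ℓ ∈ Finset.Icc 1 n, Z ℓ ω ≤ -1}).toReal) ≤ B := by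
  set I : ℕ → ℝ := fun n => ∫ ω, ⨆ k : Finset.Icc 1 n, Z k.1 ω ∂μ with hI
  set C : ℝ := ∫ ω, |Z 1 ω| ∂μ with hC
  -- I is monotone from index 1 on
  have hImono : ∀ n : ℕ, 1 ≤ n → I n ≤ I (n + 1) := by
    intro n hn
    have hne1 : (Finset.Icc 1 n).Nonempty := ⟨1, Finset.mem_Icc.mpr ⟨le_rfl, hn⟩⟩
    have hne2 : (Finset.Icc 1 (n+1)).Nonempty := ⟨1, Finset.mem_Icc.mpr ⟨le_rfl, by omega⟩⟩
    have e1 : (fun ω => ⨆ k : Finset.Icc 1 n, Z k.1 ω)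
        = fun ω => (Finset.Icc 1 n).sup' hne1 (fun k => Z k ω) :=
      funext fun ω => mySup'Eq Z _ hne1 ω
    have e2 : (fun ω => ⨆ k : Finset.Icc 1 (n+1), Z k.1 ω)
        = fun ω => (Finset.Icc 1 (n+1)).sup' hne2 (fun k => Z k ω) :=
      funext fun ω => mySup'Eq Z _ hne2 ω
    simp only [hI, e1, e2]
    refine integral_mono (myIntegrableSup' μ Z hint _ _) (myIntegrableSup' μ Z hint _ _) ?_
    intro ω
    exact Finset.sup'_mono _ (Finset.Icc_subset_Icc le_rfl (by omega)) hne1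
  -- a tends to atTop
  have hatop : Tendsto a atTop atTop := by
    set J : ℕ → ℝ := fun k => I (k + 1) with hJ
    have hJmono : Monotone J := monotone_nat_of_le_succ (fun k => hImono (k+1) (by omega))
    by_cases hbdd : BddAbove (Set.range J)
    · exfalso
      set L : ℝ := ⨆ k, J k with hL
      have hJlim : Tendsto J atTop (nhds L) := tendsto_atTop_ciSup hJmono hbdd
      have hIlim : Tendsto I atTop (nhds L) := (tendsto_add_atTop_iff_nat 1).mp hJlim
      have hev : ∀ᶠ n in atTop, B / 2 < I n / a n :=
        hlim.eventually (eventually_gt_nhds (by linarith))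
      have hIpos : ∀ᶠ n in atTop, 0 < I n := by
        filter_upwards [hev] with n hn
        have h1 : 0 < I n / a n := lt_trans (half_pos hB) hn
        have h2 := mul_pos h1 (hapos n)
        rwa [div_mul_cancel₀ _ (hapos n).ne'] at h2
      have heq : ∀ᶠ n in atTop, I n / (I n / a n) = a n := by
        filter_upwards [hIpos] with n hn
        rw [div_div_eq_mul_div, mul_comm, mul_div_assoc, div_self hn.ne', mul_one]
      have halim : Tendsto a atTop (nhds (L / B)) :=
        ((hIlim.div hlim hB.ne')).congr' heq
      obtain ⟨n₀, hn₀pos, hn₀ge⟩ := (hIpos.and (eventually_ge_atTop 1)).exists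
      have hJle : J (n₀ - 1) ≤ L := le_ciSup hbdd (n₀ - 1)
      have hJeq : J (n₀ - 1) = I n₀ := by
        simp only [hJ]
        congr 1
        omega
      have hLpos : 0 < L := lt_of_lt_of_le hn₀pos (hJeq ▸ hJle)
      have hLBpos : 0 < L / B := div_pos hLpos hB
      have hg : Tendsto (fun n : ℕ => ⌊(2:ℝ) * n⌋₊) atTop atTop := by
        refine tendsto_atTop_mono (fun n => ?_) tendsto_id
        calc (n : ℕ) = ⌊((n:ℕ) : ℝ)⌋₊ := (Nat.floor_natCast n).symm
          _ ≤ ⌊(2:ℝ) * n⌋₊ := Nat.floor_le_floor (by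
              have : (0:ℝ) ≤ (n:ℝ) := Nat.cast_nonneg n
              linarith)
      have h2 : Tendsto (fun n : ℕ => a ⌊(2:ℝ) * n⌋₊ / a n) atTop
          (nhds ((L/B) / (L/B))) := (halim.comp hg).div halim hLBpos.ne'
      have huniq : (L/B) / (L/B) = (2:ℝ) ^ γ :=
        tendsto_nhds_unique h2 (hreg 2 two_pos)
      rw [div_self hLBpos.ne'] at huniq
      have : (1:ℝ) < (2:ℝ) ^ γ :=
        (Real.one_lt_rpow_iff_of_pos two_pos).mpr (Or.inl ⟨one_lt_two, hγ.1⟩)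
      linarith
    · have hJtop : Tendsto J atTop atTop := tendsto_atTop_atTop_of_monotone' hJmono hbdd
      have hItop : Tendsto I atTop atTop := (tendsto_add_atTop_iff_nat 1).mp hJtop
      have hev : ∀ᶠ n in atTop, I n / a n < 2 * B :=
        hlim.eventually (eventually_lt_nhds (by linarith))
      refine tendsto_atTop_mono' atTop ?_ (hItop.atTop_div_const (by linarith : (0:ℝ) < 2*B))
      filter_upwards [hev] with n hn
      have h1 : I n < 2 * B * a n := (div_lt_iff₀ (hapos n)).mp hn
      rw [div_le_iff₀ (by linarith : (0:ℝ) < 2*B)]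
      calc I n ≤ 2*B*a n := le_of_lt h1
        _ = a n * (2*B) := by ring
  -- final step
  have hC0 : Tendsto (fun n => C / a n) atTop (nhds 0) := tendsto_const_nhds.div_atTop hatop
  have hglim : Tendsto (fun n => I n / a n + C / a n) atTop (nhds B) := by
    simpa using hlim.add hC0
  have hle : ∀ᶠ n : ℕ in atTop, (n : ℝ) / a n * (μ {ω | ∀ ℓ ∈ Finset.Icc 1 n, Z ℓ ω ≤ -1}).toReal
      ≤ I n / a n + C / a n := by
    filter_upwards [eventually_ge_atTop 1] with n hn
    have key := myKey μ Z hmeas hZ0 hstat hint hcent n hn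
    calc (n : ℝ) / a n * (μ {ω | ∀ ℓ ∈ Finset.Icc 1 n, Z ℓ ω ≤ -1}).toReal
        = ((n : ℝ) * (μ {ω | ∀ ℓ ∈ Finset.Icc 1 n, Z ℓ ω ≤ -1}).toReal) / a n := by ring
      _ ≤ (I n + C) / a n := by
          have hpos := hapos n
          gcongr
      _ = I n / a n + C / a n := add_div _ _ _
  refine le_trans (limsup_le_limsup hle ?_ ?_) (le_of_eq hglim.limsup_eq)
  · refine isCoboundedUnder_le_of_le atTop (x := 0) (fun n => ?_)
    have h1 : (0:ℝ) ≤ (n : ℝ) / a n := div_nonneg (Nat.cast_nonneg n) (hapos n).le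
    exact mul_nonneg h1 ENNReal.toReal_nonneg
  · exact hglim.isBoundedUnder_le
end
end
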